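/- In Q_2(√5), the element -15 + 4√5 is a square. Consequently, Q_2(√5)(√(-30 + 8√5)) = Q_2(√5, √2), which is a biquadratic extension of Q_2. -/

import Mathlib

open PadicInt Polynomial

private lemma key9 (n : ℕ) (x : ℤ_[2]) :
    ‖x‖ ≤ 2 ^ (-(n:ℤ)) ↔ PadicInt.toZModPow n x = 0 := by
  rw [show ((2:ℝ)) = ((2:ℕ):ℝ) by norm_num,
    PadicInt.norm_le_pow_iff_mem_span_pow, ← PadicInt.ker_toZModPow, RingHom.mem_ker]

private lemma key9_dvd (n : ℕ) (x : ℤ_[2]) :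
    (2:ℤ_[2]) ^ n ∣ x ↔ PadicInt.toZModPow n x = 0 := by
  rw [← key9, show ((2:ℝ)) = ((2:ℕ):ℝ) by norm_num, PadicInt.norm_le_pow_iff_mem_span_pow,
    Ideal.mem_span_singleton]
  norm_cast

private lemma sqrt_exists9 (c : ℤ_[2]) (h : toZModPow 3 (c - 1) = 0) :
    ∃ r : ℤ_[2], r ^ 2 = c ∧ toZModPow 2 (r - 1) = 0 := by
  have hF : ∀ r : ℤ_[2], (X ^ 2 - C c).eval r = r ^ 2 - c := by intro r; simp
  have hF' : ∀ r : ℤ_[2], (derivative (X ^ 2 - C c)).eval r = 2 * r := by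
    intro r; simp [derivative_sub]; norm_num
  have hnorm : ‖(X ^ 2 - C c).eval 1‖ < ‖(derivative (X ^ 2 - C c)).eval 1‖ ^ 2 := by
    rw [hF, hF']
    have h1 : ‖(1:ℤ_[2]) ^ 2 - c‖ ≤ 2 ^ (-(3:ℕ):ℤ) := by
      rw [key9, show (1:ℤ_[2])^2 - c = -(c-1) by ring, map_neg, h, neg_zero]
    have h2 : ‖(2:ℤ_[2]) * 1‖ = 2⁻¹ := by simpa using @PadicInt.norm_p 2 _
    rw [h2]
    calc ‖(1:ℤ_[2])^2 - c‖ ≤ 2 ^ (-(3:ℕ):ℤ) := h1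
      _ < (2:ℝ)⁻¹ ^ 2 := by norm_num
  obtain ⟨r, hr0, hr1, -, -⟩ := hensels_lemma hnorm
  refine ⟨r, by have := hF r; rw [← coe_aeval_eq_eval, hr0] at this; exact (sub_eq_zero.mp this.symm), ?_⟩
  · rw [← key9]
    have h3 : ‖r - 1‖ < ‖(2:ℤ_[2]) * 1‖ := by rw [← hF' 1]; exact hr1
    rw [show ‖(2:ℤ_[2]) * 1‖ = 2⁻¹ by simpa using @PadicInt.norm_p 2 _] at h3
    have h4 := (PadicInt.norm_le_pow_iff_norm_lt_pow_add_one (r - 1) (-2)).2 (by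
      convert h3 using 2 <;> norm_num)
    simpa using h4

private lemma norm5_9 : ‖(5:ℚ_[2])‖ = 1 := by
  have hle : ‖((5:ℤ):ℚ_[2])‖ ≤ 1 := Padic.norm_int_le_one 5
  have hlt : ¬ ‖((5:ℤ):ℚ_[2])‖ < 1 := by
    rw [Padic.norm_intCast_lt_one_iff]; decide
  push_cast at hle hlt; linarith

private lemma norm2_9 : ‖(2:ℚ_[2])‖ = 2⁻¹ := by simpa using @Padic.norm_p 2 _

private lemma no_sqrt_unit9 (d : ℤ_[2]) (e : ZMod 8) (hval : toZModPow 3 d = e)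
    (hd : ∀ y : ZMod 8, y ^ 2 ≠ e)
    (x : ℚ_[2]) (hn : ‖(d:ℚ_[2])‖ = 1) : x ^ 2 ≠ (d:ℚ_[2]) := by
  intro hx
  have hsq : ‖x‖^2 = ‖(d:ℚ_[2])‖ := by rw [← hx, _root_.norm_pow]
  have hx1 : ‖x‖ ≤ 1 := by nlinarith [norm_nonneg x]
  set x' : ℤ_[2] := ⟨x, hx1⟩ with hx'
  have h2 : x' ^ 2 = d := Subtype.ext (by push_cast [hx']; exact hx)
  exact hd (toZModPow 3 x') (by rw [← hval, ← h2, map_pow])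

private lemma no_sqrt5_9 (x : ℚ_[2]) : x ^ 2 ≠ 5 := by
  have := no_sqrt_unit9 5 5 (map_ofNat _ 5) (by decide) x (by push_cast; exact norm5_9)
  push_cast at this; exact this

private lemma odd_val_aux9 (x : ℚ_[2]) (hx0 : x ≠ 0) (h1 : ‖x‖ ^ 2 = ‖(2:ℚ_[2])‖) : False := by
  rw [Padic.norm_eq_zpow_neg_valuation hx0, norm2_9] at h1
  push_cast at h1
  rw [← zpow_natCast ((2:ℝ)^(_)), ← zpow_mul, show ((2:ℝ))⁻¹ = 2 ^ (-1:ℤ) by norm_num] at h1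
  have := (zpow_right_strictMono₀ (by norm_num : (1:ℝ) < 2)).injective h1
  omega

private lemma no_sqrt2_9 (x : ℚ_[2]) : x ^ 2 ≠ 2 := by
  intro hx
  have hx0 : x ≠ 0 := by rintro rfl; norm_num at hx
  exact odd_val_aux9 x hx0 (by rw [← _root_.norm_pow, hx])

private lemma no_sqrt2_5_9 (x : ℚ_[2]) : 5 * x ^ 2 ≠ 2 := by
  intro hx
  have hx0 : x ≠ 0 := by rintro rfl; norm_num at hx
  refine odd_val_aux9 x hx0 ?_
  have : ‖(5:ℚ_[2])‖ * ‖x ^ 2‖ = ‖(2:ℚ_[2])‖ := by rw [← _root_.norm_mul, hx]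
  rw [norm5_9, one_mul, _root_.norm_pow] at this; exact this

set_option maxRecDepth 40000 in
private lemma exists_AB9 : ∃ A B : ℚ_[2], A ^ 2 + 5 * B ^ 2 = -15 ∧ A * B = 2 := by
  obtain ⟨x, hx2, hx1⟩ := sqrt_exists9 145 (by
    rw [show (145 - 1 : ℤ_[2]) = 144 by norm_num,
      show (144:ℤ_[2]) = ((144:ℕ):ℤ_[2]) by push_cast; ring, map_natCast]
    decide)
  have hy : ∀ y : ZMod (2^7), y ^ 2 = 145 →
      ZMod.castHom (show (2^2:ℕ) ∣ 2^7 by norm_num) (ZMod (2^2)) y = 1 →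
      ZMod.castHom (show (2^6:ℕ) ∣ 2^7 by norm_num) (ZMod (2^6)) y = 41 := by decide
  have h41 : toZModPow 6 x = 41 := by
    have e1 : (toZModPow 7 x) ^ 2 = 145 := by
      rw [← map_pow, hx2, show (145:ℤ_[2]) = ((145:ℕ):ℤ_[2]) by push_cast; ring, map_natCast]
      push_cast; ring
    have e2 : ZMod.castHom (show (2^2:ℕ) ∣ 2^7 by norm_num) (ZMod (2^2)) (toZModPow 7 x) = 1 := by
      rw [ZMod.castHom_apply, cast_toZModPow 2 7 (by norm_num)]
      have := hx1
      rwa [map_sub, map_one, sub_eq_zero] at this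
    have := hy _ e1 e2
    rwa [ZMod.castHom_apply, cast_toZModPow 6 7 (by norm_num)] at this
  have hdvd : (8:ℤ_[2]) ∣ (-15 - x) := by
    rw [show (8:ℤ_[2]) = 2^3 by norm_num, key9_dvd]
    have h3 : toZModPow 3 x = 1 := by
      have := cast_toZModPow 3 6 (by norm_num) x
      rw [h41] at this
      rw [← this]; decide
    rw [map_sub, h3, show (-15:ℤ_[2]) = ((-15:ℤ):ℤ_[2]) by push_cast; ring, map_intCast]
    decide
  obtain ⟨u, hu⟩ := hdvd
  have hu8 : toZModPow 3 (u - 1) = 0 := by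
    rw [← key9_dvd]
    have h64 : (2:ℤ_[2])^6 ∣ (-23 - x) := by
      rw [key9_dvd, map_sub, h41, show (-23:ℤ_[2]) = ((-23:ℤ):ℤ_[2]) by push_cast; ring,
        map_intCast]
      decide
    obtain ⟨k, hk⟩ := h64
    refine ⟨k, ?_⟩
    have h8 : (8:ℤ_[2]) * (u - 1) = (8:ℤ_[2]) * ((2:ℤ_[2])^3 * k) := by
      rw [mul_sub, ← hu]; push_cast at hk ⊢; linear_combination hk
    have := mul_left_cancel₀ (by norm_num : (8:ℤ_[2]) ≠ 0) h8
    rw [this]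
  obtain ⟨a0, ha2, -⟩ := sqrt_exists9 u hu8
  set A : ℚ_[2] := ((2 * a0 : ℤ_[2]) : ℚ_[2]) with hA
  have hX2 : ((x:ℚ_[2])) ^ 2 = 145 := by
    have := congrArg (fun t : ℤ_[2] => (t : ℚ_[2])) hx2
    push_cast at this
    rw [show ((145:ℤ_[2]):ℚ_[2]) = 145 from rfl] at this
    exact this
  have hA2 : 2 * A ^ 2 = -15 - (x:ℚ_[2]) := by
    have := congrArg (fun t : ℤ_[2] => (t : ℚ_[2])) hu
    have ha := congrArg (fun t : ℤ_[2] => (t : ℚ_[2])) ha2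
    push_cast at this ha
    rw [show ((15:ℤ_[2]):ℚ_[2]) = 15 from rfl, show ((8:ℤ_[2]):ℚ_[2]) = 8 from rfl] at this
    rw [hA]; push_cast
    rw [show ((2:ℤ_[2]):ℚ_[2]) = 2 from rfl]
    linear_combination -this + 8 * ha
  have hA0 : A ≠ 0 := by
    rintro h0
    rw [h0] at hA2
    have : (x:ℚ_[2]) = -15 := by linear_combination hA2
    rw [this] at hX2
    norm_num at hX2
  refine ⟨A, 2 / A, ?_, by field_simp⟩
  have hkey : A ^ 4 + 15 * A ^ 2 + 20 = 0 := by
    linear_combination (2*A^2 + 15 - (x:ℚ_[2]))/4 * hA2 + (1/4) * hX2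
  field_simp
  linear_combination hkey

/-- In `ℚ₂(√5)` the element `-15 + 4√5` is a square; consequently, adjoining a square root
`t` of `-30 + 8√5` gives `ℚ₂(√5, √2)`, which is a biquadratic (degree 4) extension of
`ℚ₂`. -/
theorem stmt9 (K : Type*) [Field K] [Algebra ℚ_[2] K] (s : K) (hs : s ^ 2 = 5) :
    (∃ z : K, z ^ 2 = -15 + 4 * s) ∧
    (∀ t : K, t ^ 2 = -30 + 8 * s →
      ∃ w : K, w ^ 2 = 2 ∧
        Algebra.adjoin ℚ_[2] ({s, t} : Set K) = Algebra.adjoin ℚ_[2] ({s, w} : Set K) ∧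
        Module.finrank ℚ_[2] (Algebra.adjoin ℚ_[2] ({s, t} : Set K)) = 4) := by
  have inj := (algebraMap ℚ_[2] K).injective
  set f := algebraMap ℚ_[2] K with hf
  have mulform : ∀ u v u' v' : ℚ_[2], (f u + f v * s) * (f u' + f v' * s)
      = f (u*u' + 5*v*v') + f (u*v' + v*u') * s := by
    intro u v u' v'
    simp only [map_add, map_mul, map_ofNat]
    linear_combination (f v * f v') * hs
  have indep1 : ∀ a b : ℚ_[2], f a + f b * s = 0 → a = 0 ∧ b = 0 := by
    intro a b h
    by_cases hb : b = 0
    · subst hb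
      simp only [map_zero, zero_mul, add_zero] at h
      exact ⟨inj (by rw [h, map_zero]), rfl⟩
    · exfalso
      apply no_sqrt5_9 (a / b)
      apply inj
      have hfb : f b ≠ 0 := fun h0 => hb (inj (by rw [h0, map_zero]))
      have hfa : f a = -(f b * s) := by linear_combination h
      rw [map_pow, map_div₀, hfa, map_ofNat]
      field_simp
      linear_combination hs
  have no2 : ∀ a b : ℚ_[2], (f a + f b * s) ^ 2 = 2 → False := by
    intro a b h
    rw [sq, mulform] at h
    have h' : f (a*a + 5*b*b - 2) + f (a*b + b*a) * s = 0 := by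
      rw [map_sub, map_ofNat]
      linear_combination h
    obtain ⟨h1, h2⟩ := indep1 _ _ h'
    have hab : a * b = 0 := by linear_combination h2 / 2
    rcases mul_eq_zero.mp hab with rfl | rfl
    · exact no_sqrt2_5_9 b (by linear_combination h1)
    · exact no_sqrt2_9 a (by linear_combination h1)
  obtain ⟨Aq, Bq, hABsum, hABprod⟩ := exists_AB9
  set z : K := f Aq + f Bq * s with hzdef
  have hz2 : z ^ 2 = -15 + 4 * s := by
    rw [hzdef, sq, mulform,
      show Aq*Aq + 5*Bq*Bq = -15 by linear_combination hABsum,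
      show Aq*Bq + Bq*Aq = 4 by linear_combination 2*hABprod, map_ofNat, map_neg, map_ofNat]
  set N : ℚ_[2] := Aq^2 - 5*Bq^2 with hNdef
  have hN0 : N ≠ 0 := by
    intro h0
    have h225 : (225:ℚ_[2]) = 80 := by
      linear_combination (15 - Aq^2 - 5*Bq^2) * hABsum + 20*(Aq*Bq + 2) * hABprod
        + (Aq^2 - 5*Bq^2) * h0
    norm_num at h225
  set zinv : K := (f Aq - f Bq * s) * f N⁻¹ with hzinvdef
  have hzz : z * zinv = 1 := by
    have e1 : z * (f Aq - f Bq * s) = f N := by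
      rw [hzdef, hNdef, map_sub, map_mul, map_pow, map_pow, map_ofNat]
      linear_combination (-(f Bq)^2) * hs
    rw [hzinvdef, ← mul_assoc, e1, ← map_mul, mul_inv_cancel₀ hN0, map_one]
  have hzmem : z ∈ Algebra.adjoin ℚ_[2] ({s} : Set K) := by
    exact add_mem (Subalgebra.algebraMap_mem _ _)
      (mul_mem (Subalgebra.algebraMap_mem _ _) (Algebra.subset_adjoin rfl))
  have hzinvmem : zinv ∈ Algebra.adjoin ℚ_[2] ({s} : Set K) := by
    exact mul_mem (sub_mem (Subalgebra.algebraMap_mem _ _)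
      (mul_mem (Subalgebra.algebraMap_mem _ _) (Algebra.subset_adjoin rfl)))
      (Subalgebra.algebraMap_mem _ _)
  refine ⟨⟨z, hz2⟩, ?_⟩
  intro t ht
  set w : K := t * zinv with hwdef
  have ht' : t ^ 2 = 2 * z ^ 2 := by rw [ht, hz2]; ring
  have hw2 : w ^ 2 = 2 := by
    have : w ^ 2 = 2 * (z * zinv) ^ 2 := by
      rw [hwdef]; linear_combination zinv^2 * ht'
    rw [hzz] at this; simpa using this
  have htw : t = w * z := by
    rw [hwdef]; linear_combination -t * hzz
  have hsub12 : ({s} : Set K) ⊆ {s, t} := by simp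
  have hsub13 : ({s} : Set K) ⊆ {s, w} := by simp
  have hadj : Algebra.adjoin ℚ_[2] ({s, t} : Set K) = Algebra.adjoin ℚ_[2] ({s, w} : Set K) := by
    apply le_antisymm
    · apply Algebra.adjoin_le
      rintro x (rfl | rfl)
      · exact Algebra.subset_adjoin (by simp)
      · rw [htw]
        exact mul_mem (Algebra.subset_adjoin (by simp)) (Algebra.adjoin_mono hsub13 hzmem)
    · apply Algebra.adjoin_le
      rintro x (rfl | rfl)
      · exact Algebra.subset_adjoin (by simp)
      · rw [hwdef]
        exact mul_mem (Algebra.subset_adjoin (by simp)) (Algebra.adjoin_mono hsub12 hzinvmem)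
  refine ⟨w, hw2, hadj, ?_⟩
  rw [hadj]
  -- now compute the rank of adjoin {s, w}
  set v : Fin 4 → K := ![1, s, w, s*w] with hv
  set V : Submodule ℚ_[2] K := Submodule.span ℚ_[2] (Set.range v) with hV
  have hv0 : v 0 = 1 := rfl
  have hv1 : v 1 = s := rfl
  have hv2 : v 2 = w := rfl
  have hv3 : v 3 = s*w := rfl
  have h1V : (1:K) ∈ V := Submodule.subset_span ⟨0, rfl⟩
  have hsV : s ∈ V := Submodule.subset_span ⟨1, rfl⟩
  have hwV : w ∈ V := Submodule.subset_span ⟨2, rfl⟩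
  have hswV : s*w ∈ V := Submodule.subset_span ⟨3, rfl⟩
  have smul_mem' : ∀ (c : ℚ_[2]) (m : K), m ∈ V → f c * m ∈ V := by
    intro c m hm
    rw [← Algebra.smul_def]
    exact V.smul_mem c hm
  have hvals : ∀ i : Fin 4, v i = 1 ∨ v i = s ∨ v i = w ∨ v i = s*w := by
    intro i; rw [hv]; fin_cases i <;> simp
  have hss : s*s = f 5 * 1 := by rw [map_ofNat]; linear_combination hs
  have hssw : s*(s*w) = f 5 * w := by rw [map_ofNat]; linear_combination w * hs
  have hsws : (s*w)*s = f 5 * w := by rw [map_ofNat]; linear_combination w * hs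
  have hww : w*w = f 2 * 1 := by rw [map_ofNat]; linear_combination hw2
  have hwsw : w*(s*w) = f 2 * s := by rw [map_ofNat]; linear_combination s * hw2
  have hsww : (s*w)*w = f 2 * s := by rw [map_ofNat]; linear_combination s * hw2
  have hswsw : (s*w)*(s*w) = f 10 * 1 := by
    rw [map_ofNat]; linear_combination w^2 * hs + 5 * hw2
  have hws : w*s = s*w := mul_comm w s
  have hprod : ∀ i j : Fin 4, v i * v j ∈ V := by
    intro i j
    rcases hvals i with hx|hx|hx|hx <;> rcases hvals j with hy|hy|hy|hy <;> rw [hx, hy] <;>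
    first
      | simpa using h1V
      | simpa using hsV
      | simpa using hwV
      | simpa using hswV
      | exact hswV
      | (rw [hss]; exact smul_mem' 5 1 h1V)
      | (rw [hssw]; exact smul_mem' 5 w hwV)
      | (rw [hsws]; exact smul_mem' 5 w hwV)
      | (rw [hww]; exact smul_mem' 2 1 h1V)
      | (rw [hwsw]; exact smul_mem' 2 s hsV)
      | (rw [hsww]; exact smul_mem' 2 s hsV)
      | (rw [hswsw]; exact smul_mem' 10 1 h1V)
      | (rw [hws]; exact hswV)
  have hmul : ∀ x y : K, x ∈ V → y ∈ V → x * y ∈ V := by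
    intro x y hx hy
    have hxy : x * y ∈ V * V := Submodule.mul_mem_mul hx hy
    have hVV : V * V ≤ V := by
      rw [hV, Submodule.span_mul_span]
      apply Submodule.span_le.mpr
      rintro _ ⟨a, ⟨i, rfl⟩, b, ⟨j, rfl⟩, rfl⟩
      exact hprod i j
    exact hVV hxy
  have hspan_eq : Subalgebra.toSubmodule (Algebra.adjoin ℚ_[2] ({s, w} : Set K)) = V := by
    apply le_antisymm
    · intro x hx
      have hle : Algebra.adjoin ℚ_[2] ({s, w} : Set K) ≤ V.toSubalgebra h1V hmul := by
        apply Algebra.adjoin_le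
        rintro x (rfl | rfl)
        · exact hsV
        · exact hwV
      exact hle hx
    · apply Submodule.span_le.mpr
      rintro _ ⟨i, rfl⟩
      rcases hvals i with hx|hx|hx|hx <;> rw [hx]
      · simp only [SetLike.mem_coe, Subalgebra.mem_toSubmodule]; exact one_mem _
      · exact Algebra.subset_adjoin (by simp)
      · exact Algebra.subset_adjoin (by simp)
      · simp only [SetLike.mem_coe, Subalgebra.mem_toSubmodule]
        exact mul_mem (Algebra.subset_adjoin (by simp)) (Algebra.subset_adjoin (by simp))
  have hli : LinearIndependent ℚ_[2] v := by
    rw [Fintype.linearIndependent_iff]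
    intro g hg
    rw [Fin.sum_univ_four] at hg
    rw [hv0, hv1, hv2, hv3] at hg
    simp only [Algebra.smul_def, mul_one] at hg
    by_cases h23 : g 2 = 0 ∧ g 3 = 0
    · obtain ⟨h2, h3⟩ := h23
      simp only [h2, h3, map_zero, zero_mul, add_zero] at hg
      obtain ⟨h0, h1⟩ := indep1 _ _ hg
      intro i
      fin_cases i <;> simp [h0, h1, h2, h3]
    · exfalso
      set Q : K := f (g 2) + f (g 3) * s with hQdef
      have hQ0 : Q ≠ 0 := fun h => h23 ⟨(indep1 _ _ h).1, (indep1 _ _ h).2⟩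
      set NQ : ℚ_[2] := (g 2)^2 - 5*(g 3)^2 with hNQdef
      have hNQ0 : NQ ≠ 0 := by
        intro h0
        rw [hNQdef] at h0
        by_cases h3 : g 3 = 0
        · rw [h3] at h0
          simp only [ne_eq, OfNat.ofNat_ne_zero, not_false_eq_true, zero_pow, mul_zero,
            sub_zero, pow_eq_zero_iff] at h0
          exact h23 ⟨h0, h3⟩
        · apply no_sqrt5_9 (g 2 / g 3)
          field_simp
          linear_combination h0
      set Qinv : K := (f (g 2) - f (g 3) * s) * f NQ⁻¹ with hQinvdef
      have hQQinv : Q * Qinv = 1 := by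
        have e1 : Q * (f (g 2) - f (g 3) * s) = f NQ := by
          rw [hQdef, hNQdef, map_sub, map_mul, map_pow, map_pow, map_ofNat]
          linear_combination (-(f (g 3))^2) * hs
        rw [hQinvdef, ← mul_assoc, e1, ← map_mul, mul_inv_cancel₀ hNQ0, map_one]
      set P : K := f (g 0) + f (g 1) * s with hPdef
      have hw_eq : w = -(P * Qinv) := by
        have h1 : Q * w = -P := by rw [hQdef, hPdef]; linear_combination hg
        calc w = (Q * Qinv) * w := by rw [hQQinv, one_mul]
          _ = Qinv * (Q * w) := by ring
          _ = -(P * Qinv) := by rw [h1]; ring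
      have hexp : w = f ((-(g 0))*(NQ⁻¹*(g 2)) + 5*(-(g 1))*(-(NQ⁻¹*(g 3))))
          + f ((-(g 0))*(-(NQ⁻¹*(g 3))) + (-(g 1))*(NQ⁻¹*(g 2))) * s := by
        rw [← mulform (-(g 0)) (-(g 1)) (NQ⁻¹*(g 2)) (-(NQ⁻¹*(g 3)))]
        rw [hw_eq, hPdef, hQinvdef]
        simp only [map_neg, map_mul]
        ring
      exact no2 _ _ (by rw [← hexp]; exact hw2)
  have hfr : Module.finrank ℚ_[2] V = 4 := by
    rw [hV, finrank_span_eq_card hli]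
    simp
  have : Module.finrank ℚ_[2] (Algebra.adjoin ℚ_[2] ({s, w} : Set K))
      = Module.finrank ℚ_[2] (Subalgebra.toSubmodule (Algebra.adjoin ℚ_[2] ({s, w} : Set K))) :=
    rfl
  rw [this, hspan_eq, hfr]
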